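/- Let G be a path graph with vertices v_1, …, v_n in path order, and let U, U' ⊆ V(G) with m(U) = m(U') be adjacent under the component sliding rule CS. Then h_U = h_{U'}; that is, the sequence of sizes of the connected components, listed in left-to-right order along the path, is invariant under any CS move. -/

import Mathlib

open scoped Classical

noncomputable section

/-- `U` induces a connected subgraph of `G`. -/
def IsConnSub {V : Type*} (G : SimpleGraph V) (U : Finset V) : Prop :=
  (G.induce (U : Set V)).Connected

/-- The set of connected components of a vertex subset `U`:
maximal subsets of `U` inducing connected subgraphs. -/
def comps {V : Type*} [Fintype V] [DecidableEq V] (G : SimpleGraph V) (U : Finset V) :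
    Finset (Finset V) :=
  Finset.univ.filter (fun C => C ⊆ U ∧ IsConnSub G C ∧
    ∀ D : Finset V, C ⊆ D → D ⊆ U → IsConnSub G D → D = C)

/-- The CC-multiset of `U`: the multiset of sizes of connected components of `U`. -/
def ccMultiset {V : Type*} [Fintype V] [DecidableEq V] (G : SimpleGraph V) (U : Finset V) :
    Multiset ℕ :=
  (comps G U).val.map Finset.card

/-- Adjacency under component jumping (CJ). -/
def adjCJ {V : Type*} [Fintype V] [DecidableEq V] (G : SimpleGraph V) (U U' : Finset V) : Prop :=
  ccMultiset G U = ccMultiset G U' ∧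
  (comps G U \ comps G U').card = 1 ∧ (comps G U' \ comps G U).card = 1

/-- Adjacency under component sliding (CS). -/
def adjCS {V : Type*} [Fintype V] [DecidableEq V] (G : SimpleGraph V) (U U' : Finset V) : Prop :=
  adjCJ G U U' ∧
  ∀ C ∈ comps G U \ comps G U', ∀ C' ∈ comps G U' \ comps G U, IsConnSub G (C ∪ C')

/-- Adjacency under CS1 (component sliding by one vertex). -/
def adjCS1 {V : Type*} [Fintype V] [DecidableEq V] (G : SimpleGraph V) (U U' : Finset V) : Prop :=
  adjCS G U U' ∧
  ∀ C ∈ comps G U \ comps G U', ∀ C' ∈ comps G U' \ comps G U,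
    (C \ C').card = 1 ∧ (C' \ C).card = 1

/-- Adjacency under token jumping (TJ). -/
def adjTJ {V : Type*} [DecidableEq V] (G : SimpleGraph V) (U U' : Finset V) : Prop :=
  (U \ U').card = 1 ∧ (U' \ U).card = 1

/-- `A` and `B` are reconfigurable under rule `R` keeping the CC-multiset equal to `M`. -/
def Reconf {V : Type*} [Fintype V] [DecidableEq V] (G : SimpleGraph V) (M : Multiset ℕ)
    (R : Finset V → Finset V → Prop) (A B : Finset V) : Prop :=
  ∃ (ℓ : ℕ) (W : ℕ → Finset V), W 0 = A ∧ W ℓ = B ∧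
    (∀ i ≤ ℓ, ccMultiset G (W i) = M) ∧ ∀ i < ℓ, R (W i) (W (i + 1))

end

section Aux
def IsIv {n : ℕ} (C : Finset (Fin n)) : Prop :=
  ∀ a ∈ C, ∀ b ∈ C, ∀ c : Fin n, a ≤ c → c ≤ b → c ∈ C

lemma isconn_iff {n : ℕ} (C : Finset (Fin n)) :
    IsConnSub (SimpleGraph.pathGraph n) C ↔ C.Nonempty ∧ IsIv C := by
  constructor
  · rintro ⟨hpre⟩
    rename_i hne
    obtain ⟨⟨x0, hx0⟩⟩ := hne
    refine ⟨⟨x0, hx0⟩, ?_⟩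
    intro a ha b hb c hac hcb
    by_contra hc
    have hac' : a < c := lt_of_le_of_ne hac (by rintro rfl; exact hc ha)
    have hcb' : c < b := lt_of_le_of_ne hcb (by rintro rfl; exact hc hb)
    have key : ∀ (x y : ↥(↑C : Set (Fin n))),
        ((SimpleGraph.pathGraph n).induce (↑C : Set (Fin n))).Walk x y →
        (x : Fin n) < c → c < (y : Fin n) → False := by
      intro x y w
      induction w with
      | nil => intro h1 h2; exact absurd (h1.trans h2) (lt_irrefl _)
      | @cons u z v hadj p ih =>
        intro h1 h2
        have hz : (z : Fin n) ∈ C := z.property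
        have hzc : (z : Fin n) ≠ c := by rintro h; rw [h] at hz; exact hc hz
        rcases lt_or_gt_of_ne hzc with hlt | hgt
        · exact ih hlt h2
        · have hadj' : (SimpleGraph.pathGraph n).Adj u z := hadj
          rw [SimpleGraph.pathGraph_adj] at hadj'
          have h1' : (u : Fin n).val < c.val := h1
          have hg' : c.val < (z : Fin n).val := hgt
          omega
    obtain ⟨w⟩ := hpre ⟨a, ha⟩ ⟨b, hb⟩
    exact key ⟨a, ha⟩ ⟨b, hb⟩ w hac' hcb'
  · rintro ⟨⟨x0, hx0⟩, hiv⟩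
    haveI : Nonempty ↥(↑C : Set (Fin n)) := ⟨⟨x0, hx0⟩⟩
    refine ⟨fun x y => ?_⟩
    have key : ∀ k : ℕ, ∀ x y : ↥(↑C : Set (Fin n)), (x : Fin n) ≤ y →
        (y : Fin n).val - (x : Fin n).val ≤ k →
        ((SimpleGraph.pathGraph n).induce (↑C : Set (Fin n))).Reachable x y := by
      intro k
      induction k with
      | zero =>
        intro x y hxy hk
        have : (x : Fin n) = y := by
          apply Fin.ext; omega
        rw [Subtype.ext this]
      | succ k ih =>
        intro x y hxy hk
        rcases eq_or_lt_of_le hxy with he | hlt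
        · rw [Subtype.ext he]
        · have hxn : (x : Fin n).val + 1 < n := by
            have := (y : Fin n).isLt
            have := (Fin.lt_def.mp hlt)
            omega
          set x' : Fin n := ⟨(x : Fin n).val + 1, hxn⟩ with hx'
          have hx'C : x' ∈ C := by
            apply hiv _ x.property _ y.property
            · exact Fin.le_def.mpr (by simp [hx'])
            · exact Fin.le_def.mpr (by have := Fin.lt_def.mp hlt; simp [hx']; omega)
          have hadj : ((SimpleGraph.pathGraph n).induce (↑C : Set (Fin n))).Adj x ⟨x', hx'C⟩ := by
            show (SimpleGraph.pathGraph n).Adj _ _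
            rw [SimpleGraph.pathGraph_adj]
            left; rfl
          refine hadj.reachable.trans (ih ⟨x', hx'C⟩ y ?_ ?_)
          · exact Fin.le_def.mpr (by have := Fin.lt_def.mp hlt; simp [hx']; omega)
          · simp [hx']; omega
    rcases le_total (x : Fin n) (y : Fin n) with h | h
    · exact key _ x y h le_rfl
    · exact (key _ y x h le_rfl).symm

lemma mem_comps_iff {V : Type*} [Fintype V] [DecidableEq V] (G : SimpleGraph V)
    (U C : Finset V) : C ∈ comps G U ↔ C ⊆ U ∧ IsConnSub G C ∧
      ∀ D : Finset V, C ⊆ D → D ⊆ U → IsConnSub G D → D = C := by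
  simp [comps]

lemma gap {n : ℕ} {U C D : Finset (Fin n)}
    (hC : C ∈ comps (SimpleGraph.pathGraph n) U) (hD : D ∈ comps (SimpleGraph.pathGraph n) U)
    (hne : C ≠ D) : ∀ x ∈ C, ∀ y ∈ D, x.val + 1 < y.val ∨ y.val + 1 < x.val := by
  rw [mem_comps_iff] at hC hD
  obtain ⟨hCU, hCc, hCm⟩ := hC
  obtain ⟨hDU, hDc, hDm⟩ := hD
  obtain ⟨hCne, hCiv⟩ := (isconn_iff C).mp hCc
  obtain ⟨hDne, hDiv⟩ := (isconn_iff D).mp hDc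
  intro x hx y hy
  by_contra hcon
  push_neg at hcon
  obtain ⟨h1, h2⟩ := hcon
  have hiv : IsIv (C ∪ D) := by
    intro a ha b hb c hac hcb
    have hac' := Fin.le_def.mp hac
    have hcb' := Fin.le_def.mp hcb
    rw [Finset.mem_union] at ha hb ⊢
    rcases ha with ha | ha <;> rcases hb with hb | hb
    · exact Or.inl (hCiv a ha b hb c hac hcb)
    · rcases le_or_gt c.val x.val with hcx | hcx
      · exact Or.inl (hCiv a ha x hx c hac (Fin.le_def.mpr hcx))
      · exact Or.inr (hDiv y hy b hb c (Fin.le_def.mpr (by omega)) hcb)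
    · rcases le_or_gt c.val y.val with hcy | hcy
      · exact Or.inr (hDiv a ha y hy c hac (Fin.le_def.mpr hcy))
      · exact Or.inl (hCiv x hx b hb c (Fin.le_def.mpr (by omega)) hcb)
    · exact Or.inr (hDiv a ha b hb c hac hcb)
  have hconn : IsConnSub (SimpleGraph.pathGraph n) (C ∪ D) := by
    rw [isconn_iff]
    exact ⟨hCne.mono Finset.subset_union_left, hiv⟩
  have hE := hCm (C ∪ D) Finset.subset_union_left (Finset.union_subset hCU hDU) hconn
  have hDC : D ⊆ C := by rw [← hE]; exact Finset.subset_union_right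
  exact hne (hDm C hDC hCU hCc)

lemma comps_nonempty {n : ℕ} {U C : Finset (Fin n)}
    (hC : C ∈ comps (SimpleGraph.pathGraph n) U) : C.Nonempty :=
  ((isconn_iff C).mp ((mem_comps_iff _ _ _).mp hC).2.1).1

lemma leftOf_or {n : ℕ} {U C D : Finset (Fin n)}
    (hC : C ∈ comps (SimpleGraph.pathGraph n) U) (hD : D ∈ comps (SimpleGraph.pathGraph n) U)
    (hne : C ≠ D) :
    (∀ x ∈ C, ∀ y ∈ D, x.val + 1 < y.val) ∨ (∀ x ∈ C, ∀ y ∈ D, y.val + 1 < x.val) := by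
  obtain ⟨x0, hx0⟩ := comps_nonempty hC
  obtain ⟨y0, hy0⟩ := comps_nonempty hD
  have hCiv := ((isconn_iff C).mp ((mem_comps_iff _ _ _).mp hC).2.1).2
  have hDiv := ((isconn_iff D).mp ((mem_comps_iff _ _ _).mp hD).2.1).2
  have hgap := gap hC hD hne
  rcases hgap x0 hx0 y0 hy0 with h0 | h0
  · left
    intro x hx y hy
    rcases hgap x hx y hy with h | h
    · exact h
    · -- y.val + 1 < x.val, but x0.val + 1 < y0.val
      exfalso
      rcases le_or_gt y0.val x.val with hc | hc
      · -- x0 ≤ y0 ≤ x, so y0 ∈ C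
        have : y0 ∈ C := hCiv x0 hx0 x hx y0 (Fin.le_def.mpr (by omega)) (Fin.le_def.mpr hc)
        rcases hgap y0 this y0 hy0 with h' | h' <;> omega
      · -- y < x < y0 so x ∈ D
        have : x ∈ D := hDiv y hy y0 hy0 x (Fin.le_def.mpr (by omega)) (Fin.le_def.mpr (by omega))
        rcases hgap x hx x this with h' | h' <;> omega
  · right
    intro x hx y hy
    rcases hgap x hx y hy with h | h
    · exfalso
      rcases le_or_gt x0.val y.val with hc | hc
      · have : x0 ∈ D := hDiv y0 hy0 y hy x0 (Fin.le_def.mpr (by omega)) (Fin.le_def.mpr hc)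
        rcases hgap x0 hx0 x0 this with h' | h' <;> omega
      · have : y ∈ C := hCiv x hx x0 hx0 y (Fin.le_def.mpr (by omega)) (Fin.le_def.mpr (by omega))
        rcases hgap y this y hy with h' | h' <;> omega
    · exact h

lemma sort_insert_split {α : Type*} [LinearOrder α] (T : Finset α) (a : α)
    (ha : ∀ t ∈ T, t < a ∨ a < t) :
    (insert a T).sort (· ≤ ·) =
      (T.filter (· < a)).sort (· ≤ ·) ++ a :: (T.filter (a < ·)).sort (· ≤ ·) := by
  classical
  have haT : a ∉ T := fun h => by rcases ha a h with h' | h' <;> exact absurd h' (lt_irrefl _)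
  refine (fun hp hs => List.Perm.eq_of_pairwise' (Finset.pairwise_sort _ _) hs hp) ?_ ?_
  · rw [← Multiset.coe_eq_coe]
    have h2 : (((T.filter (· < a)).sort (· ≤ ·) ++ a :: (T.filter (a < ·)).sort (· ≤ ·) : List α) : Multiset α)
        = (T.filter (· < a)).val + (a ::ₘ (T.filter (a < ·)).val) := by
      rw [← Multiset.coe_add, ← Multiset.cons_coe, Finset.sort_eq, Finset.sort_eq]
    rw [Finset.sort_eq, h2]
    have h3 : (insert a T).val = a ::ₘ T.val := Finset.insert_val_of_notMem haT
    have h4 : T.val = (T.filter (· < a)).val + (T.filter (a < ·)).val := by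
      rw [Finset.filter_val, Finset.filter_val]
      have hc : Multiset.filter (fun t => a < t) T.val = Multiset.filter (fun t => ¬ t < a) T.val := by
        apply Multiset.filter_congr
        intro t ht
        constructor
        · intro h'; exact not_lt.mpr h'.le
        · intro h'
          rcases ha t ht with h'' | h''
          · exact absurd h'' h'
          · exact h''
      rw [hc, Multiset.filter_add_not]
    rw [h3, h4]
    rw [Multiset.add_cons]
  · rw [List.pairwise_append]
    refine ⟨Finset.pairwise_sort _ _, ?_, ?_⟩
    · rw [List.pairwise_cons]
      refine ⟨fun y hy => ?_, Finset.pairwise_sort _ _⟩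
      have := (Finset.mem_filter.mp ((Finset.mem_sort _).mp hy)).2
      exact this.le
    · intro x hx y hy
      have hx' := (Finset.mem_filter.mp ((Finset.mem_sort _).mp hx)).2
      rcases List.mem_cons.mp hy with rfl | hy'
      · exact hx'.le
      · have := (Finset.mem_filter.mp ((Finset.mem_sort _).mp hy')).2
        exact (hx'.trans this).le

lemma list_key {α : Type*} [LinearOrder α] (T : Finset α) (a b : α) (f g : α → ℕ)
    (hsep : ∀ t ∈ T, (t < a ∧ t < b) ∨ (a < t ∧ b < t))
    (hfg : ∀ t ∈ T, f t = g t) (hab : f a = g b) :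
    ((insert a T).sort (· ≤ ·)).map f = ((insert b T).sort (· ≤ ·)).map g := by
  classical
  have ha : ∀ t ∈ T, t < a ∨ a < t := fun t ht => (hsep t ht).imp And.left And.left
  have hb : ∀ t ∈ T, t < b ∨ b < t := fun t ht => (hsep t ht).imp And.right And.right
  rw [sort_insert_split T a ha, sort_insert_split T b hb]
  have e1 : T.filter (· < a) = T.filter (· < b) := by
    apply Finset.filter_congr
    intro t ht
    rcases hsep t ht with ⟨h1, h2⟩ | ⟨h1, h2⟩ <;> simp [h1, h2, not_lt.mpr h1.le, not_lt.mpr h2.le]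
  have e2 : T.filter (a < ·) = T.filter (b < ·) := by
    apply Finset.filter_congr
    intro t ht
    rcases hsep t ht with ⟨h1, h2⟩ | ⟨h1, h2⟩ <;> simp [h1, h2, not_lt.mpr h1.le, not_lt.mpr h2.le]
  rw [← e1, ← e2, List.map_append, List.map_append, List.map_cons, List.map_cons, hab]
  have m1 : (((T.filter (· < a)).sort (· ≤ ·)).map f) = (((T.filter (· < a)).sort (· ≤ ·)).map g) := by
    apply List.map_congr_left
    intro t ht
    exact hfg t (Finset.mem_filter.mp ((Finset.mem_sort _).mp ht)).1
  have m2 : (((T.filter (a < ·)).sort (· ≤ ·)).map f) = (((T.filter (a < ·)).sort (· ≤ ·)).map g) := by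
    apply List.map_congr_left
    intro t ht
    exact hfg t (Finset.mem_filter.mp ((Finset.mem_sort _).mp ht)).1
  rw [m1, m2]


lemma min_ne {n : ℕ} {U C D : Finset (Fin n)}
    (hC : C ∈ comps (SimpleGraph.pathGraph n) U) (hD : D ∈ comps (SimpleGraph.pathGraph n) U)
    (hne : C ≠ D) : C.min ≠ D.min := by
  intro he
  obtain ⟨hCne⟩ := comps_nonempty hC
  have h1 : C.min' (comps_nonempty hC) = D.min' (comps_nonempty hD) := by
    have c1 : (↑(C.min' (comps_nonempty hC)) : WithTop (Fin n)) = C.min := Finset.coe_min' _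
    have c2 : (↑(D.min' (comps_nonempty hD)) : WithTop (Fin n)) = D.min := Finset.coe_min' _
    have := c1.trans (he.trans c2.symm)
    exact_mod_cast this
  have hm1 := Finset.min'_mem C (comps_nonempty hC)
  have hm2 := Finset.min'_mem D (comps_nonempty hD)
  rw [h1] at hm1
  rcases gap hC hD hne _ hm1 _ hm2 with h | h <;> omega

lemma finMinLtMin {n : ℕ} {C D : Finset (Fin n)} (hC : C.Nonempty) (hD : D.Nonempty)
    (h : ∀ x ∈ C, ∀ y ∈ D, x.val + 1 < y.val) : C.min < D.min := by
  have c1 : (↑(C.min' hC) : WithTop (Fin n)) = C.min := Finset.coe_min' _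
  have c2 : (↑(D.min' hD) : WithTop (Fin n)) = D.min := Finset.coe_min' _
  rw [← c1, ← c2]
  have := h _ (Finset.min'_mem C hC) _ (Finset.min'_mem D hD)
  exact_mod_cast Fin.lt_def.mpr (by omega)

lemma cross_sep {n : ℕ} {U U' C C' D : Finset (Fin n)}
    (hC : C ∈ comps (SimpleGraph.pathGraph n) U) (hC' : C' ∈ comps (SimpleGraph.pathGraph n) U')
    (hD : D ∈ comps (SimpleGraph.pathGraph n) U) (hD' : D ∈ comps (SimpleGraph.pathGraph n) U')
    (hDC : D ≠ C) (hDC' : D ≠ C')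
    (hconn : IsConnSub (SimpleGraph.pathGraph n) (C ∪ C')) :
    ((∀ x ∈ D, ∀ y ∈ C, x.val + 1 < y.val) ∧ (∀ x ∈ D, ∀ y ∈ C', x.val + 1 < y.val)) ∨
    ((∀ x ∈ D, ∀ y ∈ C, y.val + 1 < x.val) ∧ (∀ x ∈ D, ∀ y ∈ C', y.val + 1 < x.val)) := by
  have hiv := ((isconn_iff _).mp hconn).2
  obtain ⟨d, hd⟩ := comps_nonempty hD
  obtain ⟨c, hc⟩ := comps_nonempty hC
  obtain ⟨c', hc'⟩ := comps_nonempty hC'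
  have contra : ∀ x y : Fin n, x ∈ C ∪ C' → y ∈ C ∪ C' → x.val < d.val → d.val < y.val → False := by
    intro x y hx hy h1 h2
    have hdm : d ∈ C ∪ C' :=
      hiv x hx y hy d (Fin.le_def.mpr (by omega)) (Fin.le_def.mpr (by omega))
    rcases Finset.mem_union.mp hdm with hdm | hdm
    · rcases gap hD hC hDC d hd d hdm with h | h <;> omega
    · rcases gap hD' hC' hDC' d hd d hdm with h | h <;> omega
  rcases leftOf_or hD hC hDC with hL | hR <;> rcases leftOf_or hD' hC' hDC' with hL' | hR'
  · exact Or.inl ⟨hL, hL'⟩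
  · exact absurd (contra c' c (Finset.mem_union_right _ hc') (Finset.mem_union_left _ hc)
      (by have := hR' d hd c' hc'; omega) (by have := hL d hd c hc; omega)) not_false
  · exact absurd (contra c c' (Finset.mem_union_left _ hc) (Finset.mem_union_right _ hc')
      (by have := hR d hd c hc; omega) (by have := hL' d hd c' hc'; omega)) not_false
  · exact Or.inr ⟨hR, hR'⟩

lemma fval {n : ℕ} {U D : Finset (Fin n)} (hD : D ∈ comps (SimpleGraph.pathGraph n) U) :
    ((comps (SimpleGraph.pathGraph n) U).filter (fun E => E.min = D.min)).sup Finset.card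
      = D.card := by
  have hf : (comps (SimpleGraph.pathGraph n) U).filter (fun E => E.min = D.min) = {D} := by
    ext E
    simp only [Finset.mem_filter, Finset.mem_singleton]
    constructor
    · rintro ⟨hE, hmin⟩
      by_contra hne
      exact min_ne hE hD hne hmin
    · rintro rfl
      exact ⟨hD, rfl⟩
  rw [hf, Finset.sup_singleton]

end Aux

/-- `h_U`: the sequence of sizes of connected components of `U` along the path,
listed in left-to-right order (ordering components by their minimum vertex). -/
noncomputable def hseq (n : ℕ) (U : Finset (Fin n)) : List ℕ :=
  (((comps (SimpleGraph.pathGraph n) U).image (fun C => C.min)).sort (· ≤ ·)).map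
    (fun m => ((comps (SimpleGraph.pathGraph n) U).filter (fun C => C.min = m)).sup Finset.card)

set_option maxHeartbeats 1000000 in
/-- On a path graph, any CS move leaves the left-to-right sequence
of component sizes invariant. -/
theorem stmt2 (n : ℕ) (U U' : Finset (Fin n))
    (h : adjCS (SimpleGraph.pathGraph n) U U') :
    hseq n U = hseq n U' := by
  classical
  set P := SimpleGraph.pathGraph n with hP
  obtain ⟨⟨hcc, h1, h2⟩, hcs⟩ := h
  obtain ⟨C, hCeq⟩ := Finset.card_eq_one.mp h1
  obtain ⟨C', hC'eq⟩ := Finset.card_eq_one.mp h2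
  have hCd : C ∈ comps P U \ comps P U' := hCeq ▸ Finset.mem_singleton_self C
  have hC'd : C' ∈ comps P U' \ comps P U := hC'eq ▸ Finset.mem_singleton_self C'
  obtain ⟨hCU, hCU'⟩ := Finset.mem_sdiff.mp hCd
  obtain ⟨hC'U', hC'U⟩ := Finset.mem_sdiff.mp hC'd
  set S := comps P U ∩ comps P U' with hS
  have hCnotS : C ∉ S := fun h => hCU' (Finset.mem_inter.mp h).2
  have hC'notS : C' ∉ S := fun h => hC'U (Finset.mem_inter.mp h).1
  have hUeq : comps P U = insert C S := by
    rw [Finset.insert_eq, ← hCeq, hS, Finset.sdiff_union_inter]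
  have hU'eq : comps P U' = insert C' S := by
    rw [Finset.insert_eq, ← hC'eq, hS, Finset.inter_comm, Finset.sdiff_union_inter]
  have hconn : IsConnSub P (C ∪ C') := hcs C hCd C' hC'd
  -- cards equal
  have hcard : C.card = C'.card := by
    have hv : (comps P U).val = C ::ₘ S.val := by
      rw [hUeq, Finset.insert_val_of_notMem hCnotS]
    have hv' : (comps P U').val = C' ::ₘ S.val := by
      rw [hU'eq, Finset.insert_val_of_notMem hC'notS]
    have hm : (C.card ::ₘ S.val.map Finset.card) = (C'.card ::ₘ S.val.map Finset.card) := by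
      have := hcc
      rw [ccMultiset, ccMultiset, hv, hv', Multiset.map_cons, Multiset.map_cons] at this
      exact this
    by_contra hne
    have := congrArg (Multiset.count C.card) hm
    rw [Multiset.count_cons_self, Multiset.count_cons_of_ne hne] at this
    omega
  -- separation facts for elements of S
  have hsep : ∀ t ∈ S.image (fun E => Finset.min E),
      (t < C.min ∧ t < C'.min) ∨ (C.min < t ∧ C'.min < t) := by
    intro t ht
    obtain ⟨D, hDS, rfl⟩ := Finset.mem_image.mp ht
    obtain ⟨hDU, hDU'⟩ := Finset.mem_inter.mp hDS
    have hDC : D ≠ C := fun h => hCU' (h ▸ hDU')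
    have hDC' : D ≠ C' := fun h => hC'U (h ▸ hDU)
    rcases cross_sep hCU hC'U' hDU hDU' hDC hDC' hconn with ⟨hL, hL'⟩ | ⟨hR, hR'⟩
    · exact Or.inl ⟨finMinLtMin (comps_nonempty hDU) (comps_nonempty hCU) hL,
        finMinLtMin (comps_nonempty hDU) (comps_nonempty hC'U') hL'⟩
    · exact Or.inr ⟨finMinLtMin (comps_nonempty hCU) (comps_nonempty hDU)
          (fun x hx y hy => hR y hy x hx),
        finMinLtMin (comps_nonempty hC'U') (comps_nonempty hDU)
          (fun x hx y hy => hR' y hy x hx)⟩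
  have hfg : ∀ t ∈ S.image (fun E => Finset.min E),
      ((comps P U).filter (fun E => E.min = t)).sup Finset.card
        = ((comps P U').filter (fun E => E.min = t)).sup Finset.card := by
    intro t ht
    obtain ⟨D, hDS, rfl⟩ := Finset.mem_image.mp ht
    obtain ⟨hDU, hDU'⟩ := Finset.mem_inter.mp hDS
    rw [fval hDU, fval hDU']
  have hab : ((comps P U).filter (fun E => E.min = C.min)).sup Finset.card
      = ((comps P U').filter (fun E => E.min = C'.min)).sup Finset.card := by
    rw [fval hCU, fval hC'U', hcard]
  have key := list_key (S.image (fun E => Finset.min E)) C.min C'.min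
    (fun m => ((comps P U).filter (fun E => E.min = m)).sup Finset.card)
    (fun m => ((comps P U').filter (fun E => E.min = m)).sup Finset.card)
    hsep hfg hab
  have himg : (comps P U).image (fun E => Finset.min E)
      = insert C.min (S.image (fun E => Finset.min E)) := by
    rw [hUeq, Finset.image_insert]
  have himg' : (comps P U').image (fun E => Finset.min E)
      = insert C'.min (S.image (fun E => Finset.min E)) := by
    rw [hU'eq, Finset.image_insert]
  unfold hseq
  rw [← hP, himg, himg']
  convert key using 3 <;> · ext x; simp
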